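/- Let G be a finite abelian group, let g₀ ∈ G, let φ : G → ℝ be the function φ(g) = δ(g − g₀) + δ(g + g₀) (where δ(0) = 1 and δ(x) = 0 for x ≠ 0), and let α > 0 be real. Then there exists a sequence (χ_n) of Gaussian pushforwards on G such that the sequence of functions δ + (α/n)·φ − χ_n is O(1/n⁴), i.e., for each g ∈ G, |δ(g) + (α/n)·φ(g) − χ_n(g)| = O(n⁻⁴) as n → ∞. -/

import Mathlib

open scoped RealInnerProductSpace

/-- A function `χ : G → ℝ` on a finite abelian group is a *Gaussian pushforward* if
there is a lattice `L` (a discrete additive subgroup of a finite-dimensional real inner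
product space) and a group homomorphism `h : L →+ G` such that for every `g`,
`χ g` is the (absolutely convergent) sum of `ρ x = exp (−π ⟨x, x⟩)` over `h ⁻¹ g`. -/
def IsGaussianPushforward {G : Type} [AddCommGroup G] (χ : G → ℝ) : Prop :=
  ∃ (V : Type) (iN : NormedAddCommGroup V),
    letI := iN
    ∃ (iI : InnerProductSpace ℝ V),
      letI := iI
      FiniteDimensional ℝ V ∧
      ∃ (L : AddSubgroup V) (h : L →+ G),
        DiscreteTopology L ∧
        ∀ g : G, HasSum (fun x : {x : L // h x = g} =>
          Real.exp (-Real.pi * ⟪((x : L) : V), ((x : L) : V)⟫)) (χ g)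

open Filter Asymptotics

/-- The delta function on a group: `δ 0 = 1` and `δ x = 0` otherwise. -/
def ddelta {G : Type} [AddCommGroup G] [DecidableEq G] : G → ℝ :=
  fun x => if x = 0 then 1 else 0

lemma delta_isGaussianPushforward {G : Type} [AddCommGroup G] [DecidableEq G] :
    IsGaussianPushforward (ddelta : G → ℝ) := by
  refine ⟨ℝ, inferInstance, inferInstance, inferInstance, ⊥, 0, inferInstance, ?_⟩
  intro g
  haveI hbotss : Subsingleton (⊥ : AddSubgroup ℝ) :=
    ⟨fun a b => Subtype.ext (by rw [AddSubgroup.mem_bot.mp a.2, AddSubgroup.mem_bot.mp b.2])⟩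
  by_cases hg : g = 0
  · subst hg
    haveI : Subsingleton {x : (⊥ : AddSubgroup ℝ) // (0 : (⊥ : AddSubgroup ℝ) →+ G) x = 0} :=
      ⟨fun a b => Subtype.ext (Subsingleton.elim _ _)⟩
    have h0 := hasSum_single
      (f := fun x : {x : (⊥ : AddSubgroup ℝ) // (0 : (⊥ : AddSubgroup ℝ) →+ G) x = 0} =>
        Real.exp (-Real.pi * ⟪((x : (⊥ : AddSubgroup ℝ)) : ℝ), ((x : (⊥ : AddSubgroup ℝ)) : ℝ)⟫))
      ⟨0, by simp⟩ (fun b hb => absurd (Subsingleton.elim b _) hb)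
    simpa [ddelta, RCLike.inner_apply] using h0
  · haveI : IsEmpty {x : (⊥ : AddSubgroup ℝ) // (0 : (⊥ : AddSubgroup ℝ) →+ G) x = g} :=
      ⟨fun x => hg (by simpa using x.2.symm)⟩
    simpa [ddelta, hg] using (hasSum_empty
      (f := fun x : {x : (⊥ : AddSubgroup ℝ) // (0 : (⊥ : AddSubgroup ℝ) →+ G) x = g} =>
        Real.exp (-Real.pi * ⟪((x : (⊥ : AddSubgroup ℝ)) : ℝ), ((x : (⊥ : AddSubgroup ℝ)) : ℝ)⟫)))

lemma gp_aux {G : Type} [AddCommGroup G] [DecidableEq G] (g₀ : G) (q : ℝ)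
    (hq0 : 0 < q) (hq : q ≤ 1/2) :
    ∃ χ : G → ℝ, IsGaussianPushforward χ ∧
      ∀ g : G, |χ g - (ddelta g + q * (ddelta (g - g₀) + ddelta (g + g₀)))| ≤ 3 * q ^ 4 := by
  have hq1 : q < 1 := lt_of_le_of_lt hq (by norm_num)
  set t : ℝ := Real.sqrt (Real.log q⁻¹ / Real.pi) with ht_def
  have hlog : 0 < Real.log q⁻¹ := Real.log_pos (by rw [one_lt_inv_iff₀]; exact ⟨hq0, hq1⟩)
  have ht : 0 < t := Real.sqrt_pos.mpr (div_pos hlog Real.pi_pos)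
  have ht2 : t ^ 2 = Real.log q⁻¹ / Real.pi := Real.sq_sqrt (le_of_lt (div_pos hlog Real.pi_pos))
  have key : ∀ k : ℤ, Real.exp (-Real.pi * ((k • t : ℝ) * (k • t : ℝ))) = q ^ (k.natAbs ^ 2) := by
    intro k
    have h1 : -Real.pi * ((k • t : ℝ) * (k • t : ℝ)) = ((k.natAbs ^ 2 : ℕ) : ℝ) * Real.log q := by
      rw [zsmul_eq_mul]
      push_cast
      rw [Nat.cast_natAbs, Int.cast_abs, sq_abs]
      have h2 : (k:ℝ) * t * ((k:ℝ) * t) = (k:ℝ)^2 * t^2 := by ring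
      rw [h2, ht2, Real.log_inv]
      field_simp
    rw [h1, Real.exp_nat_mul, Real.exp_log hq0]
  have hq0' : (0:ℝ) ≤ q := le_of_lt hq0
  have hnat : Summable (fun n : ℕ => q ^ (n ^ 2)) := by
    refine Summable.of_nonneg_of_le (fun n => pow_nonneg hq0' _) (fun n => ?_)
      (summable_geometric_of_lt_one hq0' hq1)
    exact pow_le_pow_of_le_one hq0' (le_of_lt hq1) (Nat.le_self_pow two_ne_zero n)
  have hsq : Summable (fun k : ℤ => q ^ (k.natAbs ^ 2)) := by
    refine Summable.of_nat_of_neg ?_ ?_ <;> simpa using hnat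
  set χ : G → ℝ := fun g => ∑' k : {k : ℤ // k • g₀ = g}, q ^ ((k : ℤ).natAbs ^ 2) with hχ
  refine ⟨χ, ?_, ?_⟩
  · -- Gaussian pushforward
    have hround : ∀ k : ℤ, round ((k • t : ℝ) / t) = k := by
      intro k
      rw [zsmul_eq_mul, mul_div_assoc, div_self (ne_of_gt ht), mul_one, round_intCast]
    have hmem : ∀ k : ℤ, (k • t : ℝ) ∈ AddSubgroup.zmultiples t :=
      fun k => AddSubgroup.mem_zmultiples_iff.mpr ⟨k, rfl⟩
    set h : AddSubgroup.zmultiples t →+ G :=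
      { toFun := fun x => round ((x : ℝ) / t) • g₀
        map_zero' := by simp
        map_add' := by
          rintro ⟨x, hx⟩ ⟨y, hy⟩
          obtain ⟨a, rfl⟩ := AddSubgroup.mem_zmultiples_iff.mp hx
          obtain ⟨b, rfl⟩ := AddSubgroup.mem_zmultiples_iff.mp hy
          show round ((((⟨a • t, hx⟩ + ⟨b • t, hy⟩ : AddSubgroup.zmultiples t) : ℝ)) / t) • g₀ =
            round ((a • t : ℝ) / t) • g₀ + round ((b • t : ℝ) / t) • g₀
          have hadd : ((⟨a • t, hx⟩ + ⟨b • t, hy⟩ : AddSubgroup.zmultiples t) : ℝ) = (a + b) • t := by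
            push_cast
            rw [add_zsmul]
          rw [hadd, hround, hround, hround, add_zsmul] } with hh
    refine ⟨ℝ, inferInstance, inferInstance, inferInstance, AddSubgroup.zmultiples t, h,
      inferInstance, ?_⟩
    intro g
    set e : {k : ℤ // k • g₀ = g} → {x : AddSubgroup.zmultiples t // h x = g} :=
      fun k => ⟨⟨(k : ℤ) • t, hmem k⟩, by
        show round (((k : ℤ) • t : ℝ) / t) • g₀ = g
        rw [hround]
        exact k.2⟩ with he
    have hbij : Function.Bijective e := by
      constructor
      · rintro ⟨a, ha⟩ ⟨b, hb⟩ hab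
        have h1 : (a • t : ℝ) = b • t :=
          congrArg (fun z : {x : AddSubgroup.zmultiples t // h x = g} => ((z.1 : ℝ))) hab
        rw [zsmul_eq_mul, zsmul_eq_mul] at h1
        have h2 : (a : ℝ) = b := mul_right_cancel₀ (ne_of_gt ht) h1
        exact Subtype.ext (by exact_mod_cast h2)
      · rintro ⟨⟨x, hx⟩, hxg⟩
        obtain ⟨a, rfl⟩ := AddSubgroup.mem_zmultiples_iff.mp hx
        refine ⟨⟨a, ?_⟩, ?_⟩
        · have h3 : round ((a • t : ℝ) / t) • g₀ = g := hxg
          rwa [hround] at h3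
        · exact Subtype.ext (Subtype.ext rfl)
    set E : {k : ℤ // k • g₀ = g} ≃ {x : AddSubgroup.zmultiples t // h x = g} :=
      Equiv.ofBijective e hbij with hE
    rw [← E.hasSum_iff]
    have heq : (fun x : {x : AddSubgroup.zmultiples t // h x = g} =>
        Real.exp (-Real.pi * ⟪((x : AddSubgroup.zmultiples t) : ℝ), ((x : AddSubgroup.zmultiples t) : ℝ)⟫)) ∘ E
        = fun k : {k : ℤ // k • g₀ = g} => q ^ ((k : ℤ).natAbs ^ 2) := by
      funext k
      show Real.exp (-Real.pi * ⟪((k : ℤ) • t : ℝ), ((k : ℤ) • t : ℝ)⟫) = _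
      rw [show ⟪((k : ℤ) • t : ℝ), ((k : ℤ) • t : ℝ)⟫ = ((k : ℤ) • t : ℝ) * ((k : ℤ) • t : ℝ) from by
        simp [RCLike.inner_apply]
        rw [← abs_mul, sq_abs, sq]]
      exact key (k : ℤ)
    rw [heq]
    exact (hsq.subtype _).hasSum
  · -- error bound
    intro g
    classical
    set f : ℤ → ℝ := fun k => if k • g₀ = g then q ^ (k.natAbs ^ 2) else 0 with hf
    have hfnn : ∀ k : ℤ, 0 ≤ f k := by
      intro k
      by_cases hk : k • g₀ = g <;> simp [hf, hk, pow_nonneg hq0']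
    have hfle : ∀ k : ℤ, f k ≤ q ^ (k.natAbs ^ 2) := by
      intro k
      by_cases hk : k • g₀ = g <;> simp [hf, hk, pow_nonneg hq0']
    have hfsumm : Summable f := Summable.of_nonneg_of_le hfnn hfle hsq
    have hχg : χ g = ∑' k : ℤ, f k := by
      have h1 : χ g = ∑' k : ({k : ℤ | k • g₀ = g} : Set ℤ), q ^ ((k:ℤ).natAbs ^ 2) := rfl
      have h2 := tsum_subtype ({k : ℤ | k • g₀ = g} : Set ℤ) (fun k : ℤ => q ^ (k.natAbs ^ 2))
      rw [h1, h2]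
      exact tsum_congr fun k => by
        by_cases hk : k • g₀ = g <;> simp [Set.indicator, hf, hk]
    set s : Finset ℤ := {-1, 0, 1} with hs
    have hsplit : ∑ k ∈ s, f k + ∑' k : {k : ℤ // k ∉ s}, f (k : ℤ) = ∑' k : ℤ, f k :=
      hfsumm.sum_add_tsum_subtype_compl s
    have hmain : ∑ k ∈ s, f k = ddelta g + q * (ddelta (g - g₀) + ddelta (g + g₀)) := by
      have hsum : ∑ k ∈ s, f k = f (-1) + f 0 + f 1 := by
        rw [hs, Finset.sum_insert (by decide), Finset.sum_insert (by decide),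
          Finset.sum_singleton]
        ring
      rw [hsum]
      have e0 : f 0 = ddelta g := by
        simp only [hf, ddelta, zero_zsmul]
        by_cases h : g = 0 <;> simp [h, eq_comm]
      have e1 : f 1 = q * ddelta (g - g₀) := by
        simp only [hf, ddelta, one_zsmul]
        by_cases h : g₀ = g
        · rw [if_pos h, if_pos (by rw [← h, sub_self])]
          norm_num
        · rw [if_neg h, if_neg (fun hc => h (sub_eq_zero.mp hc).symm), mul_zero]
      have em1 : f (-1) = q * ddelta (g + g₀) := by
        simp only [hf, ddelta, neg_smul, one_zsmul]
        by_cases h : g + g₀ = 0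
        · rw [if_pos (neg_eq_of_add_eq_zero_left h), if_pos h]
          norm_num
        · rw [if_neg (fun hc => h (by rw [← hc, neg_add_cancel])), if_neg h, mul_zero]
      rw [e0, e1, em1]
      ring
    set r : ℝ := q ^ 2 with hr
    have hr0 : 0 ≤ r := sq_nonneg q
    have hr1 : r < 1 := by
      have : r ≤ q := by rw [hr, sq]; nlinarith
      linarith
    set u : ℤ → ℝ := fun k => if 2 ≤ k.natAbs then r ^ k.natAbs else 0 with hu
    set a : ℝ := r ^ 2 * (1 - r)⁻¹ with ha
    have hgeo : HasSum (fun n : ℕ => r ^ n) (1 - r)⁻¹ := hasSum_geometric_of_lt_one hr0 hr1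
    have hnatu : HasSum (fun n : ℕ => u (n : ℤ)) a := by
      have h2 : HasSum (fun n : ℕ => u (((n + 2 : ℕ)) : ℤ)) a := by
        have heq2 : (fun n : ℕ => u (((n + 2 : ℕ)) : ℤ)) = fun n : ℕ => r ^ 2 * r ^ n := by
          funext n
          simp only [hu, Int.natAbs_natCast]
          rw [if_pos (by omega), pow_add]
          ring
        rw [heq2]
        simpa [ha] using hgeo.mul_left (r ^ 2)
      have h3 := (hasSum_nat_add_iff (f := fun n : ℕ => u (n : ℤ)) 2).mp h2
      have hz : (∑ i ∈ Finset.range 2, u ((i : ℕ) : ℤ)) = 0 := by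
        rw [Finset.sum_range_succ, Finset.sum_range_one]
        norm_num [hu]
      rw [hz, add_zero] at h3
      exact h3
    have hnegu : HasSum (fun n : ℕ => u (-((n : ℤ) + 1))) a := by
      have hna : ∀ n : ℕ, (-((n : ℤ) + 1)).natAbs = n + 1 := by intro n; omega
      have heq : (fun n : ℕ => u (-((n : ℤ) + 1))) = fun n : ℕ => u (((n + 1 : ℕ)) : ℤ) := by
        funext n
        simp only [hu, hna, Int.natAbs_natCast]
      rw [heq]
      refine (hasSum_nat_add_iff (f := fun n : ℕ => u (n : ℤ)) 1).mpr ?_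
      have hz : (∑ i ∈ Finset.range 1, u ((i : ℕ) : ℤ)) = 0 := by
        rw [Finset.sum_range_one]
        norm_num [hu]
      rw [hz, add_zero]
      exact hnatu
    have husum : HasSum u (a + a) := hnatu.of_nat_of_neg_add_one hnegu
    set R : ℝ := ∑' k : {k : ℤ // k ∉ s}, f (k : ℤ) with hR
    have hunn : ∀ k : ℤ, 0 ≤ u k := by
      intro k
      by_cases hk : 2 ≤ k.natAbs <;> simp [hu, hk, pow_nonneg hr0]
    have hR0 : 0 ≤ R := tsum_nonneg (fun k => hfnn _)
    have hRle : R ≤ a + a := by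
      rw [hR, ← husum.tsum_eq]
      refine (hfsumm.subtype _).tsum_le_tsum_of_inj (fun k : {k : ℤ // k ∉ s} => (k : ℤ))
        Subtype.val_injective (fun c _ => hunn c) (fun i => ?_)
        husum.summable
      have hna : 2 ≤ (i : ℤ).natAbs := by
        have h4 := i.2
        simp only [hs, Finset.mem_insert, Finset.mem_singleton] at h4
        omega
      have hle2 : 2 * (i : ℤ).natAbs ≤ (i : ℤ).natAbs ^ 2 := by nlinarith
      have hq2 : q ^ ((i : ℤ).natAbs ^ 2) ≤ r ^ (i : ℤ).natAbs := by
        rw [hr, ← pow_mul]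
        exact pow_le_pow_of_le_one hq0' (le_of_lt hq1) hle2
      show f (i : ℤ) ≤ u (i : ℤ)
      simp only [hu]
      rw [if_pos hna]
      exact le_trans (hfle _) hq2
    have hfinal : a + a ≤ 3 * q ^ 4 := by
      have hqq : r ≤ 1 / 4 := by rw [hr]; nlinarith
      have h34 : (3:ℝ)/4 ≤ 1 - r := by linarith
      have hinv : (1 - r)⁻¹ ≤ 4 / 3 := by
        rw [show ((4:ℝ)/3) = ((3:ℝ)/4)⁻¹ by norm_num]
        exact inv_anti₀ (by norm_num) h34
      have hr2 : r ^ 2 = q ^ 4 := by rw [hr, ← pow_mul]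
      have hq4 : (0:ℝ) ≤ q ^ 4 := pow_nonneg hq0' 4
      rw [ha, hr2]
      nlinarith [mul_le_mul_of_nonneg_left hinv hq4]
    have hdecomp : χ g - (ddelta g + q * (ddelta (g - g₀) + ddelta (g + g₀))) = R := by
      rw [hχg, ← hsplit, hmain, hR]
      ring
    rw [hdecomp, abs_of_nonneg hR0]
    exact le_trans hRle hfinal

/-- For `φ g = δ (g − g₀) + δ (g + g₀)` and `α > 0`, there is a sequence `χ n` of
Gaussian pushforwards with `δ + (α/n)·φ − χ n = O(1/n⁴)`, pointwise in `g`. -/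
theorem gaussian_approx
    {G : Type} [AddCommGroup G] [DecidableEq G]
    (g₀ : G) (φ : G → ℝ) (hφ : φ = fun g => ddelta (g - g₀) + ddelta (g + g₀))
    (α : ℝ) (hα : 0 < α) :
    ∃ χ : ℕ → G → ℝ, (∀ n, IsGaussianPushforward (χ n)) ∧
      ∀ g : G,
        (fun n : ℕ => ddelta g + α / n * φ g - χ n g) =O[atTop]
          fun n : ℕ => 1 / (n : ℝ) ^ 4 := by
  subst hφ
  have hex : ∀ n : ℕ, ∃ c : G → ℝ, IsGaussianPushforward c ∧
      ((0 < α / n ∧ α / n ≤ 1/2) →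
        ∀ g : G, |c g - (ddelta g + α / n * (ddelta (g - g₀) + ddelta (g + g₀)))| ≤
          3 * (α / n) ^ 4) := by
    intro n
    by_cases h : 0 < α / n ∧ α / n ≤ 1/2
    · obtain ⟨c, h1, h2⟩ := gp_aux g₀ (α / n) h.1 h.2
      exact ⟨c, h1, fun _ => h2⟩
    · exact ⟨ddelta, delta_isGaussianPushforward, fun hc => absurd hc h⟩
  choose χ h1 h2 using hex
  refine ⟨χ, h1, ?_⟩
  intro g
  rw [isBigO_iff]
  refine ⟨3 * α ^ 4, ?_⟩
  filter_upwards [eventually_ge_atTop (max 1 ⌈2 * α⌉₊)] with n hn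
  have hn1 : 1 ≤ n := le_trans (le_max_left _ _) hn
  have hn2 : 2 * α ≤ (n : ℝ) := by
    have := le_trans (le_max_right 1 ⌈2 * α⌉₊) hn
    calc 2 * α ≤ (⌈2 * α⌉₊ : ℝ) := Nat.le_ceil _
    _ ≤ (n : ℝ) := by exact_mod_cast this
  have hnpos : (0:ℝ) < n := by exact_mod_cast hn1
  have hcond : 0 < α / n ∧ α / n ≤ 1/2 := by
    constructor
    · exact div_pos hα hnpos
    · rw [div_le_iff₀ hnpos]
      linarith
  have hb := h2 n hcond g
  have habs : |ddelta g + α / n * (ddelta (g - g₀) + ddelta (g + g₀)) - χ n g| ≤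
      3 * (α / n) ^ 4 := by
    rw [abs_sub_comm] at hb
    exact hb
  calc ‖ddelta g + α / ↑n * (ddelta (g - g₀) + ddelta (g + g₀)) - χ n g‖
      ≤ 3 * (α / n) ^ 4 := habs
    _ = 3 * α ^ 4 * ‖1 / (n:ℝ) ^ 4‖ := by
        rw [Real.norm_eq_abs, abs_of_nonneg (by positivity), div_pow]
        field_simp
    _ ≤ 3 * α ^ 4 * ‖1 / (n:ℝ) ^ 4‖ := le_rfl
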